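/- Let n ≥ 6 and let G be a connected simple graph on n vertices having a Laplacian eigenvalue of multiplicity n − 3. Then G contains no induced subgraph isomorphic to J₃, the graph on five vertices v₁, v₂, v₃, v₄, u whose edges are exactly v₁v₂, v₂v₃, v₃v₄, uv₁, uv₂, uv₃, uv₄ (that is, the join K₁∇P₄ of a single vertex with the path on four vertices). -/

import Mathlib

open Matrix Polynomial


lemma charpoly_conj' {m : Type*} [Fintype m] [DecidableEq m] (U V A : Matrix m m ℝ)
    (hUV : U * V = 1) : (U * A * V).charpoly = A.charpoly := by
  have hmapUV : U.map (C : ℝ →+* ℝ[X]) * V.map C = 1 := by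
    rw [← Matrix.map_mul, hUV, Matrix.map_one _ (map_zero _) (map_one _)]
  have hcomm : U.map (C : ℝ →+* ℝ[X]) * scalar m X * V.map C = scalar m X := by
    rw [(scalar_commute (X : ℝ[X]) (fun r => Commute.all X r) (U.map C)).eq.symm,
      mul_assoc, hmapUV, mul_one]
  have key : charmatrix (U * A * V) = U.map C * charmatrix A * V.map C := by
    rw [charmatrix, charmatrix, Matrix.mul_sub, Matrix.sub_mul]
    congr 1
    · exact hcomm.symm
    · simp only [RingHom.mapMatrix_apply, Matrix.map_mul]
  rw [Matrix.charpoly, Matrix.charpoly, key, det_mul, det_mul]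
  have h2 : det (U.map (C : ℝ →+* ℝ[X])) * det (V.map C) = 1 := by
    rw [← det_mul, hmapUV, det_one]
  calc (U.map (C : ℝ →+* ℝ[X])).det * (charmatrix A).det * (V.map C).det
      = ((U.map (C : ℝ →+* ℝ[X])).det * (V.map C).det) * (charmatrix A).det := by ring
    _ = (charmatrix A).det := by rw [h2, one_mul]

lemma hermitian_charpoly {m : Type*} [Fintype m] [DecidableEq m] [LinearOrder m]
    {A : Matrix m m ℝ} (hA : A.IsHermitian) :
    A.charpoly = ∏ i, (X - C (hA.eigenvalues i)) := by
  have h1 : (hA.eigenvectorUnitary : Matrix m m ℝ) * (star hA.eigenvectorUnitary : Matrix m m ℝ) = 1 :=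
    hA.eigenvectorUnitary.2.2
  have h : A.charpoly = (diagonal (RCLike.ofReal ∘ hA.eigenvalues) : Matrix m m ℝ).charpoly := by
    conv_lhs => rw [hA.spectral_theorem]
    exact charpoly_conj' _ _ _ h1
  rw [h, charpoly_of_upperTriangular _ (blockTriangular_diagonal _)]
  simp

lemma mult_le_finrank {m : Type*} [Fintype m] [DecidableEq m] [LinearOrder m]
    {A : Matrix m m ℝ} (hA : A.IsHermitian) (α : ℝ) :
    A.charpoly.rootMultiplicity α ≤
      Module.finrank ℝ ↥(LinearMap.ker (Matrix.toLin' (A - α • (1 : Matrix m m ℝ)))) := by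
  classical
  have hcp := hermitian_charpoly hA
  have hroots : A.charpoly.roots = Finset.univ.val.map hA.eigenvalues := by
    rw [hcp, Finset.prod_eq_multiset_prod,
      show (fun i => X - C (hA.eigenvalues i)) = ((fun a => X - C a) ∘ hA.eigenvalues) from rfl,
      ← Multiset.map_map, roots_multiset_prod_X_sub_C]
  have hmult : A.charpoly.rootMultiplicity α =
      Fintype.card {i : m // α = hA.eigenvalues i} := by
    rw [← Polynomial.count_roots, hroots, Multiset.count_map, Fintype.card_subtype]
    rfl
  rw [hmult]
  set W := LinearMap.ker (Matrix.toLin' (A - α • (1 : Matrix m m ℝ))) with hW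
  set v : m → (m → ℝ) := fun j => (WithLp.equiv 2 _) (hA.eigenvectorBasis j) with hv
  have hli : LinearIndependent ℝ v := by
    have h1 : LinearIndependent ℝ (⇑(hA.eigenvectorBasis.toBasis)) :=
      Module.Basis.linearIndependent _
    have h2 := h1.map' (WithLp.linearEquiv 2 ℝ (m → ℝ)).toLinearMap
      (LinearEquiv.ker _)
    exact h2
  have hmem : ∀ j : {i : m // α = hA.eigenvalues i}, v j.1 ∈ W := by
    rintro ⟨j, hj⟩
    simp only [LinearMap.mem_ker, Matrix.toLin'_apply, W]
    rw [Matrix.sub_mulVec, Matrix.smul_mulVec, Matrix.one_mulVec]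
    show A *ᵥ (hA.eigenvectorBasis j).ofLp - α • (hA.eigenvectorBasis j).ofLp = 0
    rw [hA.mulVec_eigenvectorBasis, ← hj]
    simp [v]
  set w : {i : m // α = hA.eigenvalues i} → ↥W := fun j => ⟨v j.1, hmem j⟩ with hw
  have hliw : LinearIndependent ℝ w := by
    apply LinearIndependent.of_comp W.subtype
    have : (W.subtype ∘ w) = v ∘ Subtype.val := rfl
    rw [this]
    exact hli.comp Subtype.val Subtype.val_injective
  exact hliw.fintype_card_le_finrank


/-- The graph `J₃ = K₁ ∇ P₄` on five vertices `v₁, v₂, v₃, v₄, u`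
(labelled `0, 1, 2, 3, 4`), whose edges are exactly
`v₁v₂, v₂v₃, v₃v₄, uv₁, uv₂, uv₃, uv₄`. -/
def J3 : SimpleGraph (Fin 5) :=
  SimpleGraph.fromEdgeSet {s(0, 1), s(1, 2), s(2, 3), s(4, 0), s(4, 1), s(4, 2), s(4, 3)}

set_option maxHeartbeats 1600000 in
/-- Let `n ≥ 6` and let `G` be a connected simple graph on `n` vertices having a
Laplacian eigenvalue of multiplicity `n − 3`. Then `G` contains no induced subgraph
isomorphic to `J₃`. -/
theorem no_induced_J3_of_laplacian_multiplicity
    (n : ℕ) (hn : 6 ≤ n)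
    (G : SimpleGraph (Fin n)) [DecidableRel G.Adj] (hconn : G.Connected)
    (hmult : ∃ α : ℝ, ((G.lapMatrix ℝ).charpoly.rootMultiplicity α) = n - 3) :
    ¬ ∃ f : Fin 5 → Fin n, Function.Injective f ∧
        ∀ i j, G.Adj (f i) (f j) ↔ J3.Adj i j := by
  rintro ⟨f, hf, hadj⟩
  obtain ⟨α, hα⟩ := hmult
  classical
  set L := G.lapMatrix ℝ with hL
  have hH : L.IsHermitian := by
    show Lᴴ = L
    rw [conjTranspose_eq_transpose_of_trivial]
    exact G.isSymm_lapMatrix (R := ℝ)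
  set W := LinearMap.ker (Matrix.toLin' (L - α • (1 : Matrix (Fin n) (Fin n) ℝ))) with hWdef
  have hWge : n - 3 ≤ Module.finrank ℝ ↥W := hα ▸ mult_le_finrank hH α
  -- α ≠ 0
  have hα0 : α ≠ 0 := by
    intro h0
    have hWker : W = LinearMap.ker (Matrix.toLin' L) := by
      rw [hWdef, h0]; simp
    have hcard : Fintype.card G.ConnectedComponent =
        Module.finrank ℝ ↥(LinearMap.ker (Matrix.toLin' L)) :=
      G.card_connectedComponent_eq_finrank_ker_toLin'_lapMatrix
    have hone : Fintype.card G.ConnectedComponent = 1 := by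
      rw [Fintype.card_eq_one_iff]
      refine ⟨G.connectedComponentMk ⟨0, by omega⟩, ?_⟩
      intro c
      refine c.ind (fun v => ?_)
      exact SimpleGraph.ConnectedComponent.eq.mpr (hconn.preconnected _ _)
    rw [hWker] at hWge
    omega
  -- the support subspace Z
  set S : Set (Fin n) := Set.range f with hS
  set Z := LinearMap.ker (LinearMap.funLeft ℝ ℝ (Subtype.val : {w : Fin n // w ∉ S} → Fin n))
    with hZdef
  have hmemZ : ∀ x : Fin n → ℝ, x ∈ Z ↔ ∀ w, w ∉ S → x w = 0 := by
    intro x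
    rw [hZdef, LinearMap.mem_ker]
    constructor
    · intro h w hw
      exact congrFun h ⟨w, hw⟩
    · intro h
      funext w
      exact h w.1 w.2
  have hZ5 : Module.finrank ℝ ↥Z = 5 := by
    have hsurj : Function.Surjective
        (LinearMap.funLeft ℝ ℝ (Subtype.val : {w : Fin n // w ∉ S} → Fin n)) :=
      LinearMap.funLeft_surjective_of_injective ℝ ℝ _ Subtype.val_injective
    have h1 := LinearMap.finrank_range_add_finrank_ker
      (LinearMap.funLeft ℝ ℝ (Subtype.val : {w : Fin n // w ∉ S} → Fin n))
    rw [LinearMap.range_eq_top.mpr hsurj] at h1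
    have h2 : Module.finrank ℝ (Fin n → ℝ) = n := by
      simp [Module.finrank_fintype_fun_eq_card]
    have hc : Fintype.card {w : Fin n // w ∈ S} = 5 := by
      rw [show Fintype.card {w : Fin n // w ∈ S} = Fintype.card ↥(Set.range f) from rfl,
        Set.card_range_of_injective hf]
      simp
    have h3 : Module.finrank ℝ ↥(⊤ : Submodule ℝ ({w : Fin n // w ∉ S} → ℝ)) = n - 5 := by
      rw [finrank_top, Module.finrank_fintype_fun_eq_card, Fintype.card_subtype_compl, hc,
        Fintype.card_fin]
    rw [h2, h3] at h1
    rw [hZdef]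
    omega
  -- dimension of the intersection
  have hinter : 2 ≤ Module.finrank ℝ ↥(W ⊓ Z) := by
    have hsum := Submodule.finrank_sup_add_finrank_inf_eq W Z
    have hle : Module.finrank ℝ ↥(W ⊔ Z) ≤ n := by
      calc Module.finrank ℝ ↥(W ⊔ Z) ≤ Module.finrank ℝ (Fin n → ℝ) := Submodule.finrank_le _
        _ = n := by rw [Module.finrank_fintype_fun_eq_card, Fintype.card_fin]
    generalize hA : Module.finrank ℝ ↥(W ⊔ Z) = A at hsum hle
    generalize hB : Module.finrank ℝ ↥(W ⊓ Z) = B at hsum ⊢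
    generalize hC : Module.finrank ℝ ↥W = Cc at hsum hWge
    generalize hD : Module.finrank ℝ ↥Z = Dd at hsum hZ5
    omega
  -- adjacency facts
  have a00 : ¬ G.Adj (f 0) (f 0) := G.irrefl
  have a01 : G.Adj (f 0) (f 1) := (hadj 0 1).mpr (by simp [J3])
  have a02 : ¬ G.Adj (f 0) (f 2) := fun h => by
    have := (hadj 0 2).mp h; revert this; simp [J3]
  have a03 : ¬ G.Adj (f 0) (f 3) := fun h => by
    have := (hadj 0 3).mp h; revert this; simp [J3]
  have a04 : G.Adj (f 0) (f 4) := (hadj 0 4).mpr (by simp [J3])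
  have a20 : ¬ G.Adj (f 2) (f 0) := fun h => a02 h.symm
  have a21 : G.Adj (f 2) (f 1) := (hadj 2 1).mpr (by simp [J3])
  have a22 : ¬ G.Adj (f 2) (f 2) := G.irrefl
  have a23 : G.Adj (f 2) (f 3) := (hadj 2 3).mpr (by simp [J3])
  have a24 : G.Adj (f 2) (f 4) := (hadj 2 4).mpr (by simp [J3])
  have a30 : ¬ G.Adj (f 3) (f 0) := fun h => a03 h.symm
  have a31 : ¬ G.Adj (f 3) (f 1) := fun h => by
    have := (hadj 3 1).mp h; revert this; simp [J3]
  have a32 : G.Adj (f 3) (f 2) := a23.symm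
  have a33 : ¬ G.Adj (f 3) (f 3) := G.irrefl
  have a34 : G.Adj (f 3) (f 4) := (hadj 3 4).mpr (by simp [J3])
  -- key injectivity property
  have key : ∀ x : Fin n → ℝ, x ∈ W → x ∈ Z → x (f 2) = 0 → x = 0 := by
    intro x hxW hxZ hx2
    have hzero : ∀ w, w ∉ S → x w = 0 := (hmemZ x).mp hxZ
    have hLx : L *ᵥ x = α • x := by
      rw [hWdef, LinearMap.mem_ker, Matrix.toLin'_apply, Matrix.sub_mulVec,
        Matrix.smul_mulVec, Matrix.one_mulVec, sub_eq_zero] at hxW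
      exact hxW
    -- sum over all coordinates is zero
    have hsumzero : ∑ v, x v = 0 := by
      have h1 : α * ∑ v, x v = ∑ v, (L *ᵥ x) v := by
        rw [hLx]; rw [Finset.mul_sum]; simp [smul_eq_mul]
      have h2 : ∑ v, (L *ᵥ x) v = 0 := by
        simp only [Matrix.mulVec, dotProduct]
        rw [Finset.sum_comm]
        apply Finset.sum_eq_zero
        intro w _
        have hcol : ∑ v, L v w = 0 := by
          have hrow := congrFun (G.lapMatrix_mulVec_const_eq_zero (R := ℝ)) w
          simp only [Matrix.mulVec, dotProduct, mul_one, Pi.zero_apply] at hrow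
          rw [← hrow]
          apply Finset.sum_congr rfl
          intro v _
          exact (congrFun (congrFun (G.isSymm_lapMatrix (R := ℝ)) v) w).symm
        rw [← Finset.sum_mul, hcol, zero_mul]
      have := h1.trans h2
      rcases mul_eq_zero.mp this with h | h
      · exact absurd h hα0
      · exact h
    -- restriction of the total sum to the five vertices
    have hsumS : x (f 0) + x (f 1) + x (f 2) + x (f 3) + x (f 4) = 0 := by
      have himg : ∑ v ∈ Finset.univ.image f, x v = ∑ v, x v := by
        apply Finset.sum_subset (Finset.subset_univ _)
        intro w _ hw
        apply hzero
        intro hwS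
        obtain ⟨j, rfl⟩ := hwS
        exact hw (Finset.mem_image_of_mem f (Finset.mem_univ j))
      rw [Finset.sum_image (fun a _ b _ h => hf h)] at himg
      rw [Fin.sum_univ_five] at himg
      rw [himg, hsumzero]
    -- eigen-equations at the five vertices
    have hcoord : ∀ i : Fin 5, α * x (f i) = (G.degree (f i) : ℝ) * x (f i) -
        ∑ j : Fin 5, if G.Adj (f i) (f j) then x (f j) else 0 := by
      intro i
      have h1 : (L *ᵥ x) (f i) = α * x (f i) := by rw [hLx]; simp
      rw [G.lapMatrix_mulVec_apply] at h1
      have h2 : ∑ w ∈ G.neighborFinset (f i), x w =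
          ∑ j : Fin 5, if G.Adj (f i) (f j) then x (f j) else 0 := by
        have e1 : ∑ w ∈ G.neighborFinset (f i), x w =
            ∑ w, if G.Adj (f i) w then x w else 0 := by
          rw [SimpleGraph.neighborFinset_eq_filter, Finset.sum_filter]
        have e2 : ∑ w ∈ Finset.univ.image f, (if G.Adj (f i) w then x w else 0) =
            ∑ w, if G.Adj (f i) w then x w else 0 := by
          apply Finset.sum_subset (Finset.subset_univ _)
          intro w _ hw
          have hxw : x w = 0 := by
            apply hzero
            intro hwS
            obtain ⟨j, rfl⟩ := hwS
            exact hw (Finset.mem_image_of_mem f (Finset.mem_univ j))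
          rw [hxw]
          exact ite_self 0
        rw [e1, ← e2, Finset.sum_image (fun a _ b _ h => hf h)]
      rw [h2] at h1
      exact h1.symm
    -- specialize
    have e0 := hcoord 0
    have e2 := hcoord 2
    have e3 := hcoord 3
    rw [Fin.sum_univ_five, if_neg a00, if_pos a01, if_neg a02, if_neg a03, if_pos a04] at e0
    rw [Fin.sum_univ_five, if_neg a20, if_pos a21, if_neg a22, if_pos a23, if_pos a24] at e2
    rw [Fin.sum_univ_five, if_neg a30, if_neg a31, if_pos a32, if_neg a33, if_pos a34] at e3
    rw [hx2] at e2
    -- b + d + e = 0 from e2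
    have h134 : x (f 1) + x (f 3) + x (f 4) = 0 := by linarith
    have h0 : x (f 0) = 0 := by linarith [hsumS, hx2]
    rw [h0] at e0
    have h14 : x (f 1) + x (f 4) = 0 := by linarith
    have h3 : x (f 3) = 0 := by linarith
    rw [h3, hx2] at e3
    have h4 : x (f 4) = 0 := by linarith
    have h1 : x (f 1) = 0 := by linarith
    funext w
    by_cases hw : w ∈ S
    · obtain ⟨j, rfl⟩ := hw
      fin_cases j
      · exact h0
      · exact h1
      · exact hx2
      · exact h3
      · exact h4
    · exact hzero w hw
  -- finrank (W ⊓ Z) ≤ 1, contradiction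
  have hle1 : Module.finrank ℝ ↥(W ⊓ Z) ≤ 1 := by
    set φ : ↥(W ⊓ Z) →ₗ[ℝ] ℝ := (LinearMap.proj (f 2)).comp (W ⊓ Z).subtype with hφ
    have hinj : Function.Injective φ := by
      rw [← LinearMap.ker_eq_bot]
      rw [Submodule.eq_bot_iff]
      rintro ⟨x, hx⟩ hker
      apply Subtype.ext
      exact key x hx.1 hx.2 hker
    have := LinearMap.finrank_le_finrank_of_injective hinj
    simpa using this
  omega
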